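/- Let H be a complex Hilbert space and H₀ the closed real-linear span of an orthonormal basis of H. Then H₀ equals its own symplectic complement: H₀' = H₀. In particular, on an infinite-dimensional (or any nonzero) complex Hilbert space the symplectic complement fails to be an orthocomplementation, since H₀ ∧ H₀' = H₀ ≠ {0}. -/

import Mathlib

/-- The symplectic complement of a real-linear subspace of a complex Hilbert space. -/
def sympS {H : Type*} [NormedAddCommGroup H] [InnerProductSpace ℂ H] (S : Set H) : Set H :=
  {ξ | ∀ h ∈ S, (inner ℂ ξ h : ℂ).im = 0}

/-- The closed real span `H₀` of an orthonormal basis of a complex Hilbert space equals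
its own symplectic complement; in particular `H₀ ∧ H₀' = H₀ ≠ {0}`, so symplectic
complementation is not an orthocomplementation. -/
theorem stmt_8 {H : Type*} [NormedAddCommGroup H] [InnerProductSpace ℂ H] [CompleteSpace H]
    [Nontrivial H] {ι : Type*} (b : HilbertBasis ι ℂ H)
    (H₀ : Set H) (hH₀ : H₀ = closure (Submodule.span ℝ (Set.range (b : ι → H)) : Set H)) :
    sympS H₀ = H₀ ∧ H₀ ∩ sympS H₀ = H₀ ∧ H₀ ≠ ({0} : Set H) := by
  classical
  have hb := b.orthonormal
  have hbb : ∀ i j, (inner ℂ ((b : ι → H) i) ((b : ι → H) j) : ℂ).im = 0 := by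
    intro i j
    rw [orthonormal_iff_ite.mp hb i j]
    split <;> simp
  have hmem : ∀ i, (b : ι → H) i ∈ H₀ := by
    intro i; rw [hH₀]
    exact subset_closure (Submodule.subset_span ⟨i, rfl⟩)
  -- Characterization of H₀
  have hK : ∀ ξ : H, ξ ∈ H₀ ↔ ∀ i, (inner ℂ ((b : ι → H) i) ξ : ℂ).im = 0 := by
    intro ξ
    constructor
    · intro hξ i
      have hcl : IsClosed {h : H | (inner ℂ ((b : ι → H) i) h : ℂ).im = 0} :=
        isClosed_eq (Complex.continuous_im.comp (innerSL ℂ ((b : ι → H) i)).continuous)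
          continuous_const
      have hsp : (Submodule.span ℝ (Set.range (b : ι → H)) : Set H) ⊆
          {h : H | (inner ℂ ((b : ι → H) i) h : ℂ).im = 0} := by
        intro h hh
        induction hh using Submodule.span_induction with
        | mem x hx => obtain ⟨j, rfl⟩ := hx; exact hbb i j
        | zero => simp
        | add x y _ _ hx hy =>
          simp only [Set.mem_setOf_eq] at hx hy ⊢
          rw [inner_add_right, Complex.add_im, hx, hy, add_zero]
        | smul r x _ hx =>
          simp only [Set.mem_setOf_eq] at hx ⊢
          rw [show r • x = ((r : ℂ)) • x from (Complex.coe_smul r x).symm, inner_smul_right]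
          simp [Complex.mul_im, hx]
      rw [hH₀] at hξ
      exact closure_minimal hsp hcl hξ
    · intro hξ
      rw [hH₀]
      have hsum := b.hasSum_repr ξ
      have htend : Filter.Tendsto
          (fun s : Finset ι => ∑ i ∈ s, (b.repr ξ i : ℂ) • (b : ι → H) i)
          Filter.atTop (nhds ξ) := hsum
      refine mem_closure_of_tendsto htend (Filter.Eventually.of_forall fun s => ?_)
      refine Submodule.sum_mem _ fun i _ => ?_
      have hre : (b.repr ξ i : ℂ) = ((b.repr ξ i).re : ℂ) := by
        apply Complex.ext
        · simp
        · simp only [Complex.ofReal_im]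
          rw [b.repr_apply_apply]
          exact hξ i
      rw [hre, Complex.coe_smul]
      exact Submodule.smul_mem _ _ (Submodule.subset_span ⟨i, rfl⟩)
  -- Characterization of sympS H₀
  have hS : ∀ ξ : H, ξ ∈ sympS H₀ ↔ ∀ i, (inner ℂ ((b : ι → H) i) ξ : ℂ).im = 0 := by
    intro ξ
    constructor
    · intro hξ i
      have h1 := hξ _ (hmem i)
      have h2 : (inner ℂ ((b : ι → H) i) ξ : ℂ) = starRingEnd ℂ (inner ℂ ξ ((b : ι → H) i)) :=
        (inner_conj_symm _ _).symm
      rw [h2, Complex.conj_im, h1, neg_zero]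
    · intro hξ h hh
      rw [hH₀] at hh
      have hcl : IsClosed {h : H | (inner ℂ ξ h : ℂ).im = 0} :=
        isClosed_eq (Complex.continuous_im.comp (innerSL ℂ ξ).continuous) continuous_const
      have hsp : (Submodule.span ℝ (Set.range (b : ι → H)) : Set H) ⊆
          {h : H | (inner ℂ ξ h : ℂ).im = 0} := by
        intro h hh
        induction hh using Submodule.span_induction with
        | mem x hx =>
          obtain ⟨j, rfl⟩ := hx
          show (inner ℂ ξ ((b : ι → H) j) : ℂ).im = 0
          have : (inner ℂ ξ ((b : ι → H) j) : ℂ) = starRingEnd ℂ (inner ℂ ((b : ι → H) j) ξ) :=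
            (inner_conj_symm _ _).symm
          rw [this, Complex.conj_im, hξ j, neg_zero]
        | zero => simp
        | add x y _ _ hx hy =>
          simp only [Set.mem_setOf_eq] at hx hy ⊢
          rw [inner_add_right, Complex.add_im, hx, hy, add_zero]
        | smul r x _ hx =>
          simp only [Set.mem_setOf_eq] at hx ⊢
          rw [show r • x = ((r : ℂ)) • x from (Complex.coe_smul r x).symm, inner_smul_right]
          simp [Complex.mul_im, hx]
      exact closure_minimal hsp hcl hh
  have heq : sympS H₀ = H₀ := by
    ext ξ; rw [hS, hK]
  refine ⟨heq, by rw [heq, Set.inter_self], ?_⟩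
  intro h0
  obtain ⟨x, hx⟩ := exists_ne (0 : H)
  have : x ∈ sympS H₀ := by
    intro h hh
    rw [h0] at hh
    simp only [Set.mem_singleton_iff] at hh
    simp [hh]
  rw [heq, h0] at this
  exact hx this
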